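/- Let Ω be a graded differential algebra carrying an operation of a finite-dimensional Lie algebra g, and let h ↦ L_h be the canonical extension of L to U(g). Then for every X ∈ g and every h ∈ U(g), one has i_X L_h = Σ_j L_{h_j^{(1)}} i_{ad(h_j^{(2)})X}, where Δh = Σ_j h_j^{(1)} ⊗ h_j^{(2)} and ad is the right adjoint action of U(g) on itself; note that ad(h)X ∈ g for X ∈ g, so the right-hand side is well defined. -/

import Mathlib

open scoped TensorProduct DirectSum

attribute [local instance 100] LieRing.ofAssociativeRing

/-- A differential making an ℕ-graded algebra into a graded differential algebra:
`d` is homogeneous of degree `+1`, squares to zero, and is an antiderivation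
(graded Leibniz rule). -/
structure IsGDA (K : Type) [Field K] (Ω : Type) [Ring Ω] [Algebra K Ω]
    (𝒜 : ℕ → Submodule K Ω) (d : Ω →ₗ[K] Ω) : Prop where
  d_mem : ∀ (n : ℕ), ∀ a ∈ 𝒜 n, d a ∈ 𝒜 (n + 1)
  d_sq : ∀ a : Ω, d (d a) = 0
  leibniz : ∀ (n : ℕ) (a b : Ω), a ∈ 𝒜 n →
    d (a * b) = d a * b + ((-1 : K) ^ n) • (a * d b)

/-- An operation (in the sense of H. Cartan) of a Lie algebra `g` in a graded
differential algebra `Ω`: a linear family of degree `-1` antiderivations `i X`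
satisfying the Cartan relation `[i X, L Y] = i ⁅X,Y⁆`, where
`L Y = i Y ∘ d + d ∘ i Y`. -/
structure IsLieOperation (K : Type) [Field K] (g : Type) [LieRing g] [LieAlgebra K g]
    (Ω : Type) [Ring Ω] [Algebra K Ω] (𝒜 : ℕ → Submodule K Ω) (d : Ω →ₗ[K] Ω)
    (i : g →ₗ[K] Module.End K Ω) : Prop where
  i_mem : ∀ (X : g) (n : ℕ), ∀ a ∈ 𝒜 (n + 1), i X a ∈ 𝒜 n
  i_deg0 : ∀ (X : g), ∀ a ∈ 𝒜 0, i X a = 0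
  antider : ∀ (X : g) (n : ℕ) (a b : Ω), a ∈ 𝒜 n →
    i X (a * b) = i X a * b + ((-1 : K) ^ n) • (a * i X b)
  cartan : ∀ X Y : g,
    i X * ((d : Module.End K Ω) * i Y + i Y * (d : Module.End K Ω))
      - ((d : Module.End K Ω) * i Y + i Y * (d : Module.End K Ω)) * i X = i ⁅X, Y⁆

section UEAHopf

variable (K : Type) [Field K] (g : Type) [LieRing g] [LieAlgebra K g]

/-- The generator `X ↦ X ⊗ 1 + 1 ⊗ X` of the coproduct of `U(g)`, as a morphism of Lie
algebras. -/
noncomputable def comulUgen : g →ₗ⁅K⁆ (UniversalEnvelopingAlgebra K g ⊗[K] UniversalEnvelopingAlgebra K g) where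
  toFun X := (UniversalEnvelopingAlgebra.ι K X) ⊗ₜ[K] 1 + 1 ⊗ₜ[K] (UniversalEnvelopingAlgebra.ι K X)
  map_add' := by intro X Y; simp [TensorProduct.add_tmul, TensorProduct.tmul_add]; abel
  map_smul' := by intro c X; simp [TensorProduct.smul_tmul', TensorProduct.tmul_smul]
  map_lie' := by
    intro X Y
    simp only [Ring.lie_def, LieHom.coe_toLinearMap, LieHom.map_lie]
    simp [Ring.lie_def, Algebra.TensorProduct.tmul_mul_tmul, mul_add, add_mul,
      TensorProduct.sub_tmul, TensorProduct.tmul_sub]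
    abel

/-- The coproduct of the Hopf algebra `U(g)`, determined by
`Δ X = X ⊗ 1 + 1 ⊗ X` for `X ∈ g`. -/
noncomputable def comulU : UniversalEnvelopingAlgebra K g →ₐ[K]
    (UniversalEnvelopingAlgebra K g ⊗[K] UniversalEnvelopingAlgebra K g) :=
  UniversalEnvelopingAlgebra.lift K (comulUgen K g)

/-- The counit of the Hopf algebra `U(g)`, determined by `ε X = 0` for `X ∈ g`. -/
noncomputable def counitU : UniversalEnvelopingAlgebra K g →ₐ[K] K :=
  UniversalEnvelopingAlgebra.lift K (0 : g →ₗ⁅K⁆ K)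

/-- The generator `X ↦ -X` of the antipode of `U(g)` (with values in the opposite
algebra), as a morphism of Lie algebras. -/
noncomputable def antiUgen : g →ₗ⁅K⁆ (UniversalEnvelopingAlgebra K g)ᵐᵒᵖ where
  toFun X := -MulOpposite.op (UniversalEnvelopingAlgebra.ι K X)
  map_add' := by intro X Y; simp; abel
  map_smul' := by intro c X; simp
  map_lie' := by
    intro X Y
    simp only [Ring.lie_def, LieHom.map_lie]
    rw [← MulOpposite.op_neg, neg_sub]
    simp [MulOpposite.op_sub, MulOpposite.op_mul]

/-- The antipode of the Hopf algebra `U(g)`, determined by `S X = -X` for `X ∈ g`. -/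
noncomputable def antiU : UniversalEnvelopingAlgebra K g →ₗ[K] UniversalEnvelopingAlgebra K g :=
  (MulOpposite.opLinearEquiv K).symm.toLinearMap ∘ₗ
    (UniversalEnvelopingAlgebra.lift K (antiUgen K g)).toLinearMap

end UEAHopf

section HopfHelpers

variable (K : Type) [Field K] (H : Type) [Ring H] [Algebra K H]

/-- The right adjoint action associated to a coproduct `comul` and an antipode `anti`:
`adAct comul anti g` is the linear map `h ↦ ad(h)g = Σⱼ S(h⁽¹⁾ⱼ) g h⁽²⁾ⱼ`. -/
noncomputable def adAct (comul : H →ₗ[K] H ⊗[K] H) (anti : H →ₗ[K] H) (g : H) :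
    H →ₗ[K] H :=
  TensorProduct.lift (LinearMap.mk₂ K (fun x y => anti x * g * y)
    (fun x x' y => by simp [map_add, add_mul])
    (fun c x y => by simp [map_smul, smul_mul_assoc])
    (fun x y y' => by simp [mul_add])
    (fun c x y => by simp [mul_smul_comm])) ∘ₗ comul

end HopfHelpers

section AuxProofs

variable (K : Type) [Field K] (g : Type) [LieRing g] [LieAlgebra K g]

open UniversalEnvelopingAlgebra

/-- Induction principle for the universal enveloping algebra. -/
theorem uea_induction {C : UniversalEnvelopingAlgebra K g → Prop}
    (halg : ∀ r : K, C (algebraMap K (UniversalEnvelopingAlgebra K g) r))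
    (hgen : ∀ x : g, C (ι K x))
    (hmul : ∀ a b, C a → C b → C (a * b))
    (hadd : ∀ a b, C a → C b → C (a + b)) (a : UniversalEnvelopingAlgebra K g) : C a := by
  obtain ⟨t, rfl⟩ := RingCon.mkₐ_surjective (α := K) (UniversalEnvelopingAlgebra.ringCon K g) a
  induction t using TensorAlgebra.induction with
  | algebraMap r => rw [AlgHom.commutes]; exact halg r
  | ι x => exact hgen x
  | mul a b ha hb => rw [map_mul]; exact hmul _ _ ha hb
  | add a b ha hb => rw [map_add]; exact hadd _ _ ha hb

theorem comulU_ι (X : g) : comulU K g (ι K X) = (ι K X) ⊗ₜ[K] 1 + 1 ⊗ₜ[K] (ι K X) := by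
  simp [comulU, comulUgen, UniversalEnvelopingAlgebra.lift_ι_apply]

theorem antiU_ι (X : g) : antiU K g (ι K X) = -(ι K X) := by
  simp [antiU, antiUgen, UniversalEnvelopingAlgebra.lift_ι_apply]

theorem antiU_one : antiU K g 1 = 1 := by
  simp [antiU]

theorem antiU_mul (x y : UniversalEnvelopingAlgebra K g) :
    antiU K g (x * y) = antiU K g y * antiU K g x := by
  simp [antiU, map_mul]

/-- The auxiliary "sandwich" map `s ⊗ t ↦ (w ↦ S(s) * w * t)`. -/
noncomputable def psiAux :
    (UniversalEnvelopingAlgebra K g ⊗[K] UniversalEnvelopingAlgebra K g) →ₗ[K]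
      Module.End K (UniversalEnvelopingAlgebra K g) :=
  TensorProduct.lift (LinearMap.mk₂ K
    (fun x y => LinearMap.mulRight K y ∘ₗ LinearMap.mulLeft K (antiU K g x))
    (fun x x' y => by ext w; simp [add_mul])
    (fun c x y => by ext w; simp [smul_mul_assoc])
    (fun x y y' => by ext w; simp [mul_add])
    (fun c x y => by ext w; simp [mul_smul_comm]))

theorem psiAux_tmul (x y w : UniversalEnvelopingAlgebra K g) :
    psiAux K g (x ⊗ₜ[K] y) w = antiU K g x * w * y := by
  simp [psiAux]

theorem adAct_eq (w h : UniversalEnvelopingAlgebra K g) :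
    adAct K (UniversalEnvelopingAlgebra K g) (comulU K g).toLinearMap (antiU K g) w h
      = psiAux K g (comulU K g h) w := by
  simp only [adAct, LinearMap.comp_apply, AlgHom.toLinearMap_apply]
  generalize (comulU K g) h = s
  induction s using TensorProduct.induction_on with
  | zero => simp
  | tmul x y => simp [psiAux_tmul]
  | add s t hs ht => simp [map_add, hs, ht]

theorem psiAux_one (w : UniversalEnvelopingAlgebra K g) : psiAux K g 1 w = w := by
  rw [Algebra.TensorProduct.one_def, psiAux_tmul, antiU_one]
  simp

theorem psiAux_mul (s t : UniversalEnvelopingAlgebra K g ⊗[K] UniversalEnvelopingAlgebra K g)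
    (w : UniversalEnvelopingAlgebra K g) :
    psiAux K g (s * t) w = psiAux K g t (psiAux K g s w) := by
  induction s using TensorProduct.induction_on with
  | zero => simp
  | tmul x y =>
    induction t using TensorProduct.induction_on with
    | zero => simp
    | tmul a b =>
      rw [Algebra.TensorProduct.tmul_mul_tmul, psiAux_tmul, psiAux_tmul, psiAux_tmul,
        antiU_mul]
      simp [mul_assoc]
    | add t t' h1 h2 => rw [mul_add, map_add, map_add]; simp [h1, h2]
  | add s s' h1 h2 =>
    rw [add_mul, map_add, map_add]
    simp only [LinearMap.add_apply, h1, h2, map_add]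

theorem adAct_one (w : UniversalEnvelopingAlgebra K g) :
    adAct K (UniversalEnvelopingAlgebra K g) (comulU K g).toLinearMap (antiU K g) w 1 = w := by
  rw [adAct_eq, map_one, psiAux_one]

theorem adAct_gen (X Y : g) :
    adAct K (UniversalEnvelopingAlgebra K g) (comulU K g).toLinearMap (antiU K g)
      (ι K X) (ι K Y) = ι K ⁅X, Y⁆ := by
  rw [adAct_eq, comulU_ι, map_add, LinearMap.add_apply, psiAux_tmul, psiAux_tmul,
    antiU_ι, antiU_one, LieHom.map_lie, Ring.lie_def]
  simp only [one_mul, mul_one, neg_mul]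
  abel

theorem adAct_mul (w h k : UniversalEnvelopingAlgebra K g) :
    adAct K (UniversalEnvelopingAlgebra K g) (comulU K g).toLinearMap (antiU K g) w (h * k)
      = adAct K (UniversalEnvelopingAlgebra K g) (comulU K g).toLinearMap (antiU K g)
          (adAct K (UniversalEnvelopingAlgebra K g) (comulU K g).toLinearMap (antiU K g) w h)
          k := by
  rw [adAct_eq, adAct_eq, adAct_eq, map_mul, psiAux_mul]

theorem adAct_mem (h : UniversalEnvelopingAlgebra K g) :
    ∀ w ∈ LinearMap.range (ι K (L := g)).toLinearMap,
      adAct K (UniversalEnvelopingAlgebra K g) (comulU K g).toLinearMap (antiU K g) w h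
        ∈ LinearMap.range (ι K (L := g)).toLinearMap := by
  induction h using uea_induction with
  | halg r =>
    intro w hw
    rw [Algebra.algebraMap_eq_smul_one, map_smul, adAct_one]
    exact Submodule.smul_mem _ r hw
  | hgen Y =>
    rintro w ⟨X, rfl⟩
    exact ⟨⁅X, Y⁆, (adAct_gen K g X Y).symm⟩
  | hmul a b ha hb =>
    intro w hw
    rw [adAct_mul]
    exact hb _ (ha _ hw)
  | hadd a b ha hb =>
    intro w hw
    rw [map_add]
    exact Submodule.add_mem _ (ha _ hw) (hb _ hw)

end AuxProofs

/-- Let `Ω` be a graded differential algebra carrying an operation of a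
finite-dimensional Lie algebra `g` and let `Lext` be the canonical extension of `L` to
`U(g)`.  Then for every `X ∈ g` and `h ∈ U(g)`,
`i_X ∘ L_h = Σⱼ L_{h⁽¹⁾ⱼ} ∘ i_{ad(h⁽²⁾ⱼ)X}`, where `ad` is the right adjoint action of
`U(g)` on itself (`ad(h)g = Σⱼ S(h⁽¹⁾ⱼ) g h⁽²⁾ⱼ`); in particular `ad(h)X ∈ g` for
`X ∈ g` (first conjunct), so the right-hand side is well defined: it is expressed via
`iU`, an arbitrary linear extension of `i` to `U(g)` (whose values on the image of `g`
are prescribed by `i`). -/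
theorem stmt3 (K : Type) [Field K] (g : Type) [LieRing g] [LieAlgebra K g]
    [Module.Finite K g]
    (Ω : Type) [Ring Ω] [Algebra K Ω] (𝒜 : ℕ → Submodule K Ω) [GradedAlgebra 𝒜]
    (d : Ω →ₗ[K] Ω) (hΩ : IsGDA K Ω 𝒜 d)
    (i : g →ₗ[K] Module.End K Ω) (hi : IsLieOperation K g Ω 𝒜 d i)
    -- the canonical extension of `L` to `U(g)`:
    (Lext : UniversalEnvelopingAlgebra K g →ₐ[K] Module.End K Ω)
    (hLext : ∀ X : g, Lext (UniversalEnvelopingAlgebra.ι K X)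
      = (d : Module.End K Ω) * i X + i X * (d : Module.End K Ω))
    -- a linear extension of `i` to `U(g)`:
    (iU : UniversalEnvelopingAlgebra K g →ₗ[K] Module.End K Ω)
    (hiU : ∀ Y : g, iU (UniversalEnvelopingAlgebra.ι K Y) = i Y) :
    (∀ (X : g) (h : UniversalEnvelopingAlgebra K g),
      adAct K (UniversalEnvelopingAlgebra K g) (comulU K g).toLinearMap (antiU K g)
          ((UniversalEnvelopingAlgebra.ι K X : UniversalEnvelopingAlgebra K g)) h
        ∈ LinearMap.range (UniversalEnvelopingAlgebra.ι K (L := g)).toLinearMap) ∧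
    (∀ (X : g) (h : UniversalEnvelopingAlgebra K g),
      i X * Lext h = TensorProduct.lift
        ((LinearMap.mul K (Module.End K Ω)).compl₁₂ Lext.toLinearMap
          (iU ∘ₗ adAct K (UniversalEnvelopingAlgebra K g) (comulU K g).toLinearMap
            (antiU K g) (UniversalEnvelopingAlgebra.ι K X)))
        (comulU K g h)) := by
  set ad : UniversalEnvelopingAlgebra K g → UniversalEnvelopingAlgebra K g →ₗ[K]
      UniversalEnvelopingAlgebra K g :=
    fun w => adAct K (UniversalEnvelopingAlgebra K g) (comulU K g).toLinearMap (antiU K g) w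
    with had
  set Bf : g → (UniversalEnvelopingAlgebra K g ⊗[K] UniversalEnvelopingAlgebra K g)
      →ₗ[K] Module.End K Ω :=
    fun X => TensorProduct.lift
      ((LinearMap.mul K (Module.End K Ω)).compl₁₂ Lext.toLinearMap
        (iU ∘ₗ ad (UniversalEnvelopingAlgebra.ι K X))) with hBf
  have hB : ∀ (X : g) (x y : UniversalEnvelopingAlgebra K g),
      Bf X (x ⊗ₜ[K] y) = Lext x * iU (ad (UniversalEnvelopingAlgebra.ι K X) y) := by
    intro X x y
    simp [hBf, LinearMap.mul_apply']
  have key : ∀ (X : g) (k : UniversalEnvelopingAlgebra K g),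
      (∀ X' : g, i X' * Lext k = Bf X' (comulU K g k)) →
      ∀ s, Bf X s * Lext k = Bf X (s * comulU K g k) := by
    intro X k hk s
    induction s using TensorProduct.induction_on with
    | zero => simp
    | tmul x y =>
      obtain ⟨Y, hY⟩ := adAct_mem K g y (UniversalEnvelopingAlgebra.ι K X) ⟨X, rfl⟩
      have hY' : UniversalEnvelopingAlgebra.ι K Y
          = ad (UniversalEnvelopingAlgebra.ι K X) y := hY
      have sub : ∀ t, Lext x * Bf Y t = Bf X ((x ⊗ₜ[K] y) * t) := by
        intro t
        induction t using TensorProduct.induction_on with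
        | zero => simp
        | tmul a b =>
          rw [Algebra.TensorProduct.tmul_mul_tmul, hB, hB, map_mul, had]
          rw [adAct_mul, ← had, ← hY', mul_assoc]
        | add t t' h1 h2 => rw [mul_add, map_add, mul_add, map_add, h1, h2]
      rw [hB, ← hY', hiU, mul_assoc, hk Y, sub]
    | add s t hs ht => rw [map_add, add_mul, hs, ht, add_mul, map_add]
  have main : ∀ (h : UniversalEnvelopingAlgebra K g) (X : g),
      i X * Lext h = Bf X (comulU K g h) := by
    intro h
    induction h using uea_induction with
    | halg r =>
      intro X
      rw [AlgHom.commutes, AlgHom.commutes, Algebra.algebraMap_eq_smul_one,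
        Algebra.algebraMap_eq_smul_one, map_smul, Algebra.TensorProduct.one_def, hB, had,
        adAct_one, hiU, map_one, one_mul, mul_smul_comm, mul_one]
    | hgen Y =>
      intro X
      rw [comulU_ι, map_add, hB, hB, had, adAct_one, adAct_gen, hiU, hiU, map_one,
        one_mul, hLext, ← hi.cartan X Y]
      abel
    | hmul h k ihh ihk =>
      intro X
      rw [map_mul, map_mul, ← mul_assoc, ihh X, key X k ihk]
    | hadd h k ihh ihk =>
      intro X
      rw [map_add, map_add, mul_add, map_add, ihh X, ihk X]
  exact ⟨fun X h => adAct_mem K g h _ ⟨X, rfl⟩, fun X h => main h X⟩
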